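/- arXiv:1304.6209 — 2 statements merged into one kernel-verified Lean document; each statement's English description precedes it below -/
import Mathlib

section
/- Let P and Q be n×n real orthogonal matrices, H = QᵀP − I, and let λ₁*, …, λₙ* be real numbers with Λ* = diag(λ₁*, …, λₙ*). Define vᵢ = 2λᵢ*Hᵢᵢ + Σⱼ₌₁ⁿ λⱼ*Hᵢⱼ² for i = 1, …, n. Then ‖v‖ ≤ 2·(max₁≤ᵢ≤ₙ |λᵢ*|)·‖H‖_F², where ‖v‖ is the Euclidean norm of v = (v₁, …, vₙ) and ‖H‖_F is the Frobenius norm of H. -/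
open scoped BigOperators
open Matrix

/-- Euclidean norm on ℝⁿ. -/
noncomputable def euclNorm {n : ℕ} (x : Fin n → ℝ) : ℝ := Real.sqrt (∑ i, x i ^ 2)

/-- Operator 2-norm of a real matrix. -/
noncomputable def opNorm {n : ℕ} (A : Matrix (Fin n) (Fin n) ℝ) : ℝ :=
  ‖Matrix.toEuclideanCLM (𝕜 := ℝ) A‖

/-- Frobenius norm of a real matrix. -/
noncomputable def frobNorm {n : ℕ} (A : Matrix (Fin n) (Fin n) ℝ) : ℝ :=
  Real.sqrt (∑ i, ∑ j, A i j ^ 2)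

theorem stmt_4 {n : ℕ} (hn : 0 < n) (P Q : Matrix (Fin n) (Fin n) ℝ)
    (hP : Pᵀ * P = 1) (hQ : Qᵀ * Q = 1)
    (H : Matrix (Fin n) (Fin n) ℝ) (hH : H = Qᵀ * P - 1)
    (lam : Fin n → ℝ) (v : Fin n → ℝ)
    (hv : ∀ i, v i = 2 * lam i * H i i + ∑ j, lam j * H i j ^ 2) :
    euclNorm v ≤ 2 * (⨆ i, |lam i|) * frobNorm H ^ 2 := by
  haveI : Nonempty (Fin n) := ⟨⟨0, hn⟩⟩
  set M := ⨆ i, |lam i| with hMdef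
  have hM : ∀ j, |lam j| ≤ M :=
    fun j => le_ciSup (f := fun i => |lam i|) (Set.Finite.bddAbove (Set.finite_range _)) j
  have hM0 : 0 ≤ M := le_trans (abs_nonneg _) (hM ⟨0, hn⟩)
  -- orthogonality relation
  have hQQ : Q * Qᵀ = 1 := mul_eq_one_comm.mp hQ
  have h1 : (1 + H)ᵀ * (1 + H) = 1 := by
    have e : (1 : Matrix (Fin n) (Fin n) ℝ) + H = Qᵀ * P := by rw [hH]; abel
    rw [e, Matrix.transpose_mul, Matrix.transpose_transpose,
      Matrix.mul_assoc, ← Matrix.mul_assoc Q, hQQ, Matrix.one_mul, hP]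
  have key : Hᵀ + H + Hᵀ * H = 0 := by
    have h2 : (1 + H)ᵀ * (1 + H) = 1 + (Hᵀ + H + Hᵀ * H) := by
      rw [Matrix.transpose_add, Matrix.transpose_one]; noncomm_ring
    rw [h2] at h1
    exact add_eq_left.mp h1
  have hdiag : ∀ i, 2 * H i i = -∑ j, H j i ^ 2 := by
    intro i
    have h := congrFun (congrFun key i) i
    simp only [Matrix.add_apply, Matrix.mul_apply, Matrix.transpose_apply,
      Matrix.zero_apply] at h
    have hs : ∑ j, H j i ^ 2 = ∑ j, H j i * H j i := by
      simp [sq]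
    rw [hs]; linarith
  -- pointwise bound
  have hvb : ∀ i, |v i| ≤ M * ((∑ j, H j i ^ 2) + ∑ j, H i j ^ 2) := by
    intro i
    have hvi : v i = -(lam i * ∑ j, H j i ^ 2) + ∑ j, lam j * H i j ^ 2 := by
      rw [hv i]
      have : 2 * lam i * H i i = lam i * (2 * H i i) := by ring
      rw [this, hdiag i]; ring
    calc |v i| ≤ |lam i * ∑ j, H j i ^ 2| + |∑ j, lam j * H i j ^ 2| := by
          rw [hvi]; rw [← abs_neg (lam i * ∑ j, H j i ^ 2)] at *
          exact abs_add_le _ _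
      _ ≤ M * (∑ j, H j i ^ 2) + M * ∑ j, H i j ^ 2 := by
          gcongr
          · rw [abs_mul]
            have h1 : |∑ j, H j i ^ 2| = ∑ j, H j i ^ 2 :=
              abs_of_nonneg (Finset.sum_nonneg fun j _ => sq_nonneg _)
            rw [h1]
            exact mul_le_mul_of_nonneg_right (hM i)
              (Finset.sum_nonneg fun j _ => sq_nonneg _)
          · calc |∑ j, lam j * H i j ^ 2| ≤ ∑ j, |lam j * H i j ^ 2| :=
                  Finset.abs_sum_le_sum_abs _ _
              _ ≤ ∑ j, M * H i j ^ 2 := by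
                  apply Finset.sum_le_sum
                  intro j _
                  rw [abs_mul, abs_of_nonneg (sq_nonneg (H i j))]
                  exact mul_le_mul_of_nonneg_right (hM j) (sq_nonneg _)
              _ = M * ∑ j, H i j ^ 2 := by rw [Finset.mul_sum]
      _ = M * ((∑ j, H j i ^ 2) + ∑ j, H i j ^ 2) := by ring
  -- enorm v ≤ ∑ |v i|
  have habs : euclNorm v ≤ ∑ i, |v i| := by
    have hS0 : 0 ≤ ∑ i, |v i| := Finset.sum_nonneg fun i _ => abs_nonneg _
    have hsq : ∑ i, v i ^ 2 ≤ (∑ i, |v i|) ^ 2 := by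
      calc ∑ i, v i ^ 2 ≤ ∑ i, |v i| * ∑ k, |v k| := by
            apply Finset.sum_le_sum
            intro i _
            rw [← sq_abs]
            rw [sq]
            exact mul_le_mul_of_nonneg_left
              (Finset.single_le_sum (fun k _ => abs_nonneg (v k)) (Finset.mem_univ i))
              (abs_nonneg _)
        _ = (∑ i, |v i|) ^ 2 := by rw [← Finset.sum_mul, sq]
    calc euclNorm v ≤ Real.sqrt ((∑ i, |v i|) ^ 2) := Real.sqrt_le_sqrt hsq
      _ = ∑ i, |v i| := Real.sqrt_sq hS0
  -- final
  have hT : frobNorm H ^ 2 = ∑ i, ∑ j, H i j ^ 2 :=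
    Real.sq_sqrt (Finset.sum_nonneg fun i _ => Finset.sum_nonneg fun j _ => sq_nonneg _)
  have hsum : ∑ i, |v i| ≤ 2 * M * ∑ i, ∑ j, H i j ^ 2 := by
    calc ∑ i, |v i| ≤ ∑ i, M * ((∑ j, H j i ^ 2) + ∑ j, H i j ^ 2) :=
          Finset.sum_le_sum fun i _ => hvb i
      _ = M * ((∑ i, ∑ j, H j i ^ 2) + ∑ i, ∑ j, H i j ^ 2) := by
          rw [← Finset.mul_sum, Finset.sum_add_distrib]
      _ = 2 * M * ∑ i, ∑ j, H i j ^ 2 := by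
          rw [Finset.sum_comm]; ring
  rw [hT]
  calc euclNorm v ≤ ∑ i, |v i| := habs
    _ ≤ 2 * M * ∑ i, ∑ j, H i j ^ 2 := hsum
end

section
/- Let f: ℝⁿ → ℝⁿ, c ∈ ℝⁿ, J ∈ ℝ^{n×n}, λ ∈ ℝⁿ, and suppose for some ε > 0 and δ > 0 that ‖f(c + d) − f(c) − Jd‖ ≤ ε‖d‖ for all d with ‖d‖ ≤ δ. Suppose further that d ∈ ℝⁿ satisfies ‖d‖ ≤ δ and ‖f(c) − λ + Jd‖ ≤ η‖f(c) − λ‖ for some η ∈ [0,1), and that ε‖d‖ ≤ (1 − ξ)(1 − η)‖f(c) − λ‖ for some ξ ∈ (0,1). Then ‖f(c + d) − λ‖ ≤ (1 − ξ(1 − η))‖f(c) − λ‖. -/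
open scoped BigOperators

/-- Euclidean norm on ℝⁿ. -/
noncomputable def euclidNorm {n : ℕ} (x : Fin n → ℝ) : ℝ := Real.sqrt (∑ i, x i ^ 2)

lemma euclidNorm_eq {n : ℕ} (x : Fin n → ℝ) :
    euclidNorm x = ‖(WithLp.equiv 2 (Fin n → ℝ)).symm x‖ := by
  rw [EuclideanSpace.norm_eq, euclidNorm]
  congr 1
  refine Finset.sum_congr rfl fun i _ => ?_
  rw [Real.norm_eq_abs, sq_abs]
  rfl

lemma euclidNorm_add_le {n : ℕ} (x y : Fin n → ℝ) :
    euclidNorm (x + y) ≤ euclidNorm x + euclidNorm y := by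
  simp only [euclidNorm_eq]
  exact norm_add_le _ _

theorem stmt_13 {n : ℕ} (f : (Fin n → ℝ) → (Fin n → ℝ)) (c : Fin n → ℝ)
    (J : Matrix (Fin n) (Fin n) ℝ) (lam : Fin n → ℝ)
    (ε δ : ℝ) (hε : 0 < ε) (hδ : 0 < δ)
    (hlin : ∀ d : Fin n → ℝ, euclidNorm d ≤ δ →
      euclidNorm (f (c + d) - f c - J.mulVec d) ≤ ε * euclidNorm d)
    (d : Fin n → ℝ) (hd : euclidNorm d ≤ δ)
    (η : ℝ) (hη : η ∈ Set.Ico (0 : ℝ) 1)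
    (hres : euclidNorm (f c - lam + J.mulVec d) ≤ η * euclidNorm (f c - lam))
    (ξ : ℝ) (hξ : ξ ∈ Set.Ioo (0 : ℝ) 1)
    (hεd : ε * euclidNorm d ≤ (1 - ξ) * (1 - η) * euclidNorm (f c - lam)) :
    euclidNorm (f (c + d) - lam) ≤ (1 - ξ * (1 - η)) * euclidNorm (f c - lam) := by
  obtain ⟨hη0, hη1⟩ := hη
  obtain ⟨hξ0, hξ1⟩ := hξ
  have key : f (c + d) - lam = (f (c + d) - f c - J.mulVec d) + (f c - lam + J.mulVec d) := by
    abel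
  have h1 := hlin d hd
  have h2 := euclidNorm_add_le (f (c + d) - f c - J.mulVec d) (f c - lam + J.mulVec d)
  rw [← key] at h2
  nlinarith [h2, h1, hres, hεd]
end
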